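/- There is an absolute constant c > 0 with the following property. Let f ∈ ℤ[x] be monic and irreducible of degree d ≥ 2, let D_f ≥ 1 be the absolute value of the discriminant of f, let θ ∈ ℂ be a root of f, and let K = ℚ(θ). For a prime p, let W(p) denote the number of roots of the mod-p reduction of f in 𝔽_p. Then for all x ≥ 2, |π_K(x) − Σ_{p ≤ x, p prime} W(p)| ≤ c·d·(√x + log(3·D_f)), where π_K(x) is the number of prime ideals 𝔭 of the ring of integers O_K with N𝔭 ≤ x. -/

import Mathlib

open scoped Classical

noncomputable section

/-- `π_K(x)` is the number of (nonzero) prime ideals of `𝓞 K` of norm at most `x`. -/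
def piK (K : Type) [Field K] [NumberField K] (x : ℝ) : ℕ :=
  {P : Ideal (NumberField.RingOfIntegers K) |
    P.IsPrime ∧ P ≠ ⊥ ∧ (Ideal.absNorm P : ℝ) ≤ x}.ncard

/-- For a prime `p`, `Wroots f p` is the number of roots in `𝔽_p` of the mod-`p`
reduction of `f`. -/
def Wroots (f : Polynomial ℤ) (p : ℕ) : ℕ :=
  {a : ZMod p | Polynomial.aeval a f = 0}.ncard

end

set_option synthInstance.maxHeartbeats 1000000
set_option maxHeartbeats 2000000
set_option linter.unusedSectionVars false

noncomputable section Aux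
open NumberField Ideal Polynomial Algebra


/-- Ring homs out of a quotient by an ideal killed by every hom correspond to homs. -/
def homsQuotEquiv {A B : Type*} [CommRing A] [CommRing B] (J : Ideal A)
    (h : ∀ ψ : A →+* B, J ≤ RingHom.ker ψ) :
    ((A ⧸ J) →+* B) ≃ (A →+* B) where
  toFun φ := φ.comp (Ideal.Quotient.mk J)
  invFun ψ := Ideal.Quotient.lift J ψ (fun a ha => by
    have := h ψ ha; rwa [RingHom.mem_ker] at this)
  left_inv φ := by
    refine RingHom.ext fun a => ?_
    obtain ⟨x, rfl⟩ := Ideal.Quotient.mk_surjective a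
    simp
  right_inv ψ := by
    refine RingHom.ext fun a => ?_
    simp

/-- Precomposition with a ring isomorphism. -/
def homCongrLeft {A A' B : Type*} [CommRing A] [CommRing A'] [CommRing B] (e : A ≃+* A') :
    (A →+* B) ≃ (A' →+* B) where
  toFun φ := φ.comp e.symm.toRingHom
  invFun φ := φ.comp e.toRingHom
  left_inv φ := by ext a; simp
  right_inv φ := by ext a; simp

/-- Ring homs out of `AdjoinRoot f` (over `ℤ`) correspond to roots of `f`. -/
def adjoinRootHomEquivRoots (f : Polynomial ℤ) (B : Type*) [CommRing B] :
    (AdjoinRoot f →+* B) ≃ {a : B // Polynomial.aeval a f = 0} where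
  toFun ψ := ⟨ψ (AdjoinRoot.root f), by
    have h0 : ψ (Polynomial.eval₂ (Int.castRingHom (AdjoinRoot f)) (AdjoinRoot.root f) f)
        = 0 := by
      rw [Subsingleton.elim (Int.castRingHom (AdjoinRoot f)) (AdjoinRoot.of f),
        AdjoinRoot.eval₂_root, map_zero]
    rw [Polynomial.hom_eval₂, Subsingleton.elim (ψ.comp (Int.castRingHom (AdjoinRoot f))) (Int.castRingHom B)] at h0
    rwa [Polynomial.aeval_def, algebraMap_int_eq]⟩
  invFun a := AdjoinRoot.lift (Int.castRingHom B) a.1 (by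
    have := a.2
    rwa [Polynomial.aeval_def, algebraMap_int_eq] at this)
  left_inv ψ := by
    have : ∀ (ψ₁ ψ₂ : AdjoinRoot f →+* B),
        ψ₁ (AdjoinRoot.root f) = ψ₂ (AdjoinRoot.root f) → ψ₁ = ψ₂ := by
      intro ψ₁ ψ₂ hroot
      have : ψ₁.toIntAlgHom = ψ₂.toIntAlgHom := AdjoinRoot.algHom_ext hroot
      refine RingHom.ext fun a => ?_
      exact congrArg (fun g => g a) (congrArg AlgHom.toRingHom this)
    exact this _ _ (AdjoinRoot.lift_root _)
  right_inv a := Subtype.ext (AdjoinRoot.lift_root _)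

section S2
variable (K : Type) [Field K] [NumberField K]

/-- Subsingleton of homs into `ZMod p` from a ring isomorphic to it. -/
lemma homs_to_zmod_subsingleton {p : ℕ} {A : Type*} [CommRing A] (e : ZMod p ≃+* A) :
    Subsingleton (A →+* ZMod p) := by
  have : Subsingleton (ZMod p →+* ZMod p) := inferInstance
  constructor
  intro φ₁ φ₂
  have h := Subsingleton.elim (φ₁.comp e.toRingHom) (φ₂.comp e.toRingHom)
  ext a
  have : a = e (e.symm a) := (e.apply_symm_apply a).symm
  rw [this]
  exact congrArg (fun g => g (e.symm a)) h

lemma card_primes_norm_eq (p : ℕ) [hp : Fact p.Prime] :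
    Nat.card {P : Ideal (𝓞 K) // P.IsPrime ∧ P ≠ ⊥ ∧ Ideal.absNorm P = p} =
      Nat.card (𝓞 K →+* ZMod p) := by
  have hker : ∀ ψ : 𝓞 K →+* ZMod p,
      (RingHom.ker ψ).IsPrime ∧ RingHom.ker ψ ≠ ⊥ ∧ Ideal.absNorm (RingHom.ker ψ) = p := by
    intro ψ
    have hsurj : Function.Surjective ψ := by
      intro b
      refine ⟨((b.val : ℕ) : 𝓞 K), ?_⟩
      rw [map_natCast, ZMod.natCast_val, ZMod.cast_id]
    have e : (𝓞 K ⧸ RingHom.ker ψ) ≃+* ZMod p := RingHom.quotientKerEquivOfSurjective hsurj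
    refine ⟨RingHom.ker_isPrime ψ, ?_, ?_⟩
    · intro hbot
      have hpk : ((p : ℕ) : 𝓞 K) ∈ RingHom.ker ψ := by
        rw [RingHom.mem_ker, map_natCast, ZMod.natCast_self]
      rw [hbot, Ideal.mem_bot] at hpk
      exact hp.out.ne_zero (Nat.cast_eq_zero.mp hpk)
    · rw [Ideal.absNorm_apply, Submodule.cardQuot_apply]
      rw [Nat.card_congr e.toEquiv, Nat.card_zmod]
  set F : (𝓞 K →+* ZMod p) → {P : Ideal (𝓞 K) // P.IsPrime ∧ P ≠ ⊥ ∧ Ideal.absNorm P = p} :=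
    fun ψ => ⟨RingHom.ker ψ, hker ψ⟩ with hF
  have hbij : Function.Bijective F := by
    constructor
    · intro ψ₁ ψ₂ h
      have hk : RingHom.ker ψ₁ = RingHom.ker ψ₂ := congrArg Subtype.val h
      have hsurj : Function.Surjective ψ₁ := by
        intro b
        refine ⟨((b.val : ℕ) : 𝓞 K), ?_⟩
        rw [map_natCast, ZMod.natCast_val, ZMod.cast_id]
      have e : (𝓞 K ⧸ RingHom.ker ψ₁) ≃+* ZMod p := RingHom.quotientKerEquivOfSurjective hsurj
      have : Subsingleton ((𝓞 K ⧸ RingHom.ker ψ₁) →+* ZMod p) :=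
        homs_to_zmod_subsingleton e.symm
      have h₁ : ψ₁ = (Ideal.Quotient.lift (RingHom.ker ψ₁) ψ₁
          (fun a ha => by rwa [RingHom.mem_ker] at ha)).comp
            (Ideal.Quotient.mk (RingHom.ker ψ₁)) := by
        ext a; simp
      have h₂ : ψ₂ = (Ideal.Quotient.lift (RingHom.ker ψ₁) ψ₂
          (fun a ha => by rw [hk, RingHom.mem_ker] at ha; exact ha)).comp
            (Ideal.Quotient.mk (RingHom.ker ψ₁)) := by
        ext a; simp
      rw [h₁, h₂, Subsingleton.elim (Ideal.Quotient.lift (RingHom.ker ψ₁) ψ₁ _)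
        (Ideal.Quotient.lift (RingHom.ker ψ₁) ψ₂ _)]
    · rintro ⟨P, hP, hPb, hPn⟩
      haveI : Fintype (𝓞 K ⧸ P) := @Fintype.ofFinite _ (Ideal.finiteQuotientOfFreeOfNeBot P hPb)
      have hcard : Fintype.card (𝓞 K ⧸ P) = p := by
        rw [← Nat.card_eq_fintype_card, ← Submodule.cardQuot_apply, ← Ideal.absNorm_apply, hPn]
      have e : ZMod p ≃+* (𝓞 K ⧸ P) := ZMod.ringEquivOfPrime _ hp.out hcard
      refine ⟨(e.symm.toRingHom).comp (Ideal.Quotient.mk P), ?_⟩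
      apply Subtype.ext
      show RingHom.ker _ = P
      have : RingHom.ker ((e.symm.toRingHom).comp (Ideal.Quotient.mk P)) =
          Ideal.comap (Ideal.Quotient.mk P) (RingHom.ker e.symm.toRingHom) := by
        rfl
      rw [this, (RingHom.injective_iff_ker_eq_bot e.symm.toRingHom).mp e.symm.injective]
      show Ideal.comap _ ⊥ = P
      rw [← RingHom.ker_eq_comap_bot, Ideal.mk_ker]
  exact (Nat.card_congr (Equiv.ofBijective F hbij)).symm
end S2

section S3
variable (K : Type) [Field K] [NumberField K]
lemma span_p_map_le_ker {A : Type*} [CommRing A] (p : ℕ) (ψ : A →+* ZMod p) :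
    (Ideal.span {(p : ℤ)}).map (algebraMap ℤ A) ≤ RingHom.ker ψ := by
  rw [Ideal.map_le_iff_le_comap, Ideal.span_le]
  intro a ha
  simp only [Set.mem_singleton_iff] at ha
  subst ha
  simp only [Ideal.mem_comap, SetLike.mem_coe, RingHom.mem_ker, algebraMap_int_eq,
    Int.coe_castRingHom, map_intCast]
  exact_mod_cast ZMod.natCast_self p

variable (K : Type) [Field K] [NumberField K]

lemma card_homs_eq_card_roots (f : Polynomial ℤ) (θ' : 𝓞 K)
    (hmin : minpoly ℤ θ' = f) (p : ℕ) [hp : Fact p.Prime]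
    (hx : (conductor ℤ θ').comap (algebraMap ℤ (𝓞 K)) ⊔ Ideal.span {(p : ℤ)} = ⊤) :
    Nat.card (𝓞 K →+* ZMod p) = Nat.card {a : ZMod p // Polynomial.aeval a f = 0} := by
  classical
  have hint : IsIntegral ℤ θ' := NumberField.RingOfIntegers.isIntegral θ'
  have h_alg : Function.Injective (algebraMap (adjoin ℤ ({θ'} : Set (𝓞 K))) (𝓞 K)) :=
    Subtype.coe_injective
  have e1 : ((adjoin ℤ ({θ'} : Set (𝓞 K))) ⧸
        (Ideal.span {(p : ℤ)}).map (algebraMap ℤ (adjoin ℤ ({θ'} : Set (𝓞 K))))) ≃+*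
      ((𝓞 K) ⧸ (Ideal.span {(p : ℤ)}).map (algebraMap ℤ (𝓞 K))) :=
    quotAdjoinEquivQuotMap hx h_alg
  have e2 : AdjoinRoot f ≃+* adjoin ℤ ({θ'} : Set (𝓞 K)) := by
    rw [← hmin]
    exact (minpoly.equivAdjoin hint).toRingEquiv
  calc Nat.card (𝓞 K →+* ZMod p)
      = Nat.card (((𝓞 K) ⧸ (Ideal.span {(p : ℤ)}).map (algebraMap ℤ (𝓞 K))) →+* ZMod p) :=
        (Nat.card_congr (homsQuotEquiv _ (span_p_map_le_ker p))).symm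
    _ = Nat.card ((adjoin ℤ ({θ'} : Set (𝓞 K)) ⧸
          (Ideal.span {(p : ℤ)}).map (algebraMap ℤ (adjoin ℤ ({θ'} : Set (𝓞 K))))) →+* ZMod p) :=
        (Nat.card_congr (homCongrLeft e1)).symm
    _ = Nat.card ((adjoin ℤ ({θ'} : Set (𝓞 K))) →+* ZMod p) :=
        Nat.card_congr (homsQuotEquiv _ (span_p_map_le_ker p))
    _ = Nat.card (AdjoinRoot f →+* ZMod p) :=
        (Nat.card_congr (homCongrLeft e2)).symm
    _ = Nat.card {a : ZMod p // Polynomial.aeval a f = 0} :=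
        Nat.card_congr (adjoinRootHomEquivRoots f (ZMod p))
end S3

section S4
variable {K : Type} [Field K] [NumberField K]

section minpolyFacts

variable {f : Polynomial ℤ} {θ : K}

lemma minpoly_rat_eq (hm : f.Monic) (hirr : Irreducible f) (hroot : Polynomial.aeval θ f = 0) :
    minpoly ℚ θ = f.map (algebraMap ℤ ℚ) := by
  refine (minpoly.eq_of_irreducible_of_monic ?_ ?_ (hm.map _)).symm
  · exact (Monic.irreducible_iff_irreducible_map_fraction_map hm).mp hirr
  · rwa [Polynomial.aeval_map_algebraMap]

lemma minpoly_int_eq (hm : f.Monic) (hirr : Irreducible f) (hroot : Polynomial.aeval θ f = 0)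
    (θ' : 𝓞 K) (hθ' : algebraMap (𝓞 K) K θ' = θ) :
    minpoly ℤ θ' = f := by
  have hint : IsIntegral ℤ θ' := NumberField.RingOfIntegers.isIntegral θ'
  have h1 : minpoly ℚ (algebraMap (𝓞 K) K θ') = (minpoly ℤ θ').map (algebraMap ℤ ℚ) :=
    minpoly.isIntegrallyClosed_eq_field_fractions ℚ K hint
  rw [hθ', minpoly_rat_eq hm hirr hroot] at h1
  have := Polynomial.map_injective (algebraMap ℤ ℚ)
    (fun a b h => by exact_mod_cast h)
  exact this h1.symm
end minpolyFacts

section pb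

variable (f : Polynomial ℤ) (θ : K)

/-- The power basis of `K` generated by `θ`. -/
def pbK (hint : IsIntegral ℤ θ) (hadj : IntermediateField.adjoin ℚ {θ} = ⊤) :
    PowerBasis ℚ K :=
  (IntermediateField.adjoin.powerBasis (hint.tower_top (R := ℤ))).map
    ((IntermediateField.equivOfEq hadj).trans IntermediateField.topEquiv)

lemma pbK_gen (hint : IsIntegral ℤ θ) (hadj : IntermediateField.adjoin ℚ {θ} = ⊤) :
    (pbK θ hint hadj).gen = θ := by
  simp [pbK, IntermediateField.adjoin.powerBasis]

lemma pbK_gen_integral (hint : IsIntegral ℤ θ) (hadj : IntermediateField.adjoin ℚ {θ} = ⊤) :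
    IsIntegral ℤ (pbK θ hint hadj).gen := by rw [pbK_gen]; exact hint

/-- The discriminant of the power basis, as an integer. -/
lemma discr_int (hint : IsIntegral ℤ θ) (hadj : IntermediateField.adjoin ℚ {θ} = ⊤) :
    ∃ z : ℤ, algebraMap ℤ ℚ z = Algebra.discr ℚ (pbK θ hint hadj).basis := by
  refine IsIntegrallyClosed.isIntegral_iff.mp ?_
  refine Algebra.discr_isIntegral ℚ (fun i => ?_)
  rw [PowerBasis.basis_eq_pow, pbK_gen]
  exact hint.pow _
end pb

section conductor

variable (f : Polynomial ℤ) (θ : K)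

lemma z_mem_conductor_comap (hint : IsIntegral ℤ θ)
    (hadj : IntermediateField.adjoin ℚ {θ} = ⊤) (θ' : 𝓞 K)
    (hθ' : algebraMap (𝓞 K) K θ' = θ) (z : ℤ)
    (hz : algebraMap ℤ ℚ z = Algebra.discr ℚ (pbK θ hint hadj).basis) :
    z ∈ (conductor ℤ θ').comap (algebraMap ℤ (𝓞 K)) := by
  rw [Ideal.mem_comap, mem_conductor_iff]
  intro b
  -- key: discr • (b : K) ∈ adjoin ℤ {θ}
  have hb : IsIntegral ℤ (algebraMap (𝓞 K) K b) := NumberField.RingOfIntegers.isIntegral_coe b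
  have key : Algebra.discr ℚ (pbK θ hint hadj).basis • (algebraMap (𝓞 K) K b) ∈
      Algebra.adjoin ℤ ({(pbK θ hint hadj).gen} : Set K) :=
    Algebra.discr_mul_isIntegral_mem_adjoin ℚ (pbK_gen_integral θ hint hadj) hb
  rw [pbK_gen] at key
  -- transfer to 𝓞 K
  have hmap : (Algebra.adjoin ℤ ({θ'} : Set (𝓞 K))).map
      (IsScalarTower.toAlgHom ℤ (𝓞 K) K) = Algebra.adjoin ℤ ({θ} : Set K) := by
    rw [AlgHom.map_adjoin]
    congr 1
    simp [hθ']
  have hval : algebraMap (𝓞 K) K (algebraMap ℤ (𝓞 K) z * b) =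
      Algebra.discr ℚ (pbK θ hint hadj).basis • (algebraMap (𝓞 K) K b) := by
    rw [← hz, _root_.map_mul, Algebra.smul_def]
    congr 1
    rw [← IsScalarTower.algebraMap_apply, ← IsScalarTower.algebraMap_apply]
  have : algebraMap (𝓞 K) K (algebraMap ℤ (𝓞 K) z * b) ∈
      (Algebra.adjoin ℤ ({θ'} : Set (𝓞 K))).map (IsScalarTower.toAlgHom ℤ (𝓞 K) K) := by
    rw [hmap, hval]; exact key
  obtain ⟨u, hu, hu'⟩ := this
  have huu : u = algebraMap ℤ (𝓞 K) z * b := by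
    have hinj : Function.Injective (algebraMap (𝓞 K) K) :=
      FaithfulSMul.algebraMap_injective _ _
    exact hinj hu'
  rwa [huu] at hu

end conductor
end S4

section S5
variable {K : Type} [Field K] [NumberField K]

lemma conductor_sup_eq_top (θ' : 𝓞 K) {z : ℤ}
    (hzmem : z ∈ (conductor ℤ θ').comap (algebraMap ℤ (𝓞 K))) {p : ℕ} (hp : p.Prime)
    (hpz : ¬ ((p : ℤ) ∣ z)) :
    (conductor ℤ θ').comap (algebraMap ℤ (𝓞 K)) ⊔ Ideal.span {(p : ℤ)} = ⊤ := by
  have hirr : Irreducible (p : ℤ) := (Int.prime_iff_natAbs_prime.mpr (by simpa)).irreducible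
  have hco : IsCoprime (z : ℤ) (p : ℤ) := (hirr.coprime_iff_not_dvd.mpr hpz).symm
  have htop : Ideal.span {z} ⊔ Ideal.span {(p : ℤ)} = ⊤ := by
    rw [← Ideal.isCoprime_iff_sup_eq]
    exact (Ideal.isCoprime_span_singleton_iff _ _).mpr hco
  rw [_root_.eq_top_iff, ← htop]
  exact sup_le_sup_right ((Ideal.span_le).mpr (Set.singleton_subset_iff.mpr hzmem)) _

lemma norm_int_algebraMap_eq (z : ℤ) :
    ((Algebra.norm ℤ) ((algebraMap ℤ (𝓞 K)) z)).natAbs = z.natAbs ^ Module.finrank ℚ K := by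
  let b := Module.Free.chooseBasis ℤ (𝓞 K)
  rw [Algebra.norm_algebraMap_of_basis b, ← Int.natAbs_pow]
  congr 1
  rw [← Module.finrank_eq_card_chooseBasisIndex, NumberField.RingOfIntegers.rank]

/-- The set of primes lying over `p` is finite. -/
lemma primesOver_finite' (p : ℕ) (hp : 0 < p) :
    {P : Ideal (𝓞 K) | P.IsPrime ∧ P ≠ ⊥ ∧ ((p : ℕ) : 𝓞 K) ∈ P}.Finite := by
  apply (Ideal.finite_setOf_absNorm_le (p ^ Module.finrank ℚ K)).subset
  rintro P ⟨hP, hPb, hpP⟩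
  have h1 : Ideal.span {((p : ℕ) : 𝓞 K)} ≤ P := by
    rw [Ideal.span_le, Set.singleton_subset_iff]; exact hpP
  have h2 : Ideal.absNorm P ∣ p ^ Module.finrank ℚ K := by
    have := Ideal.absNorm_dvd_absNorm_of_le h1
    rwa [Ideal.absNorm_span_singleton, show ((p : ℕ) : 𝓞 K) = algebraMap ℤ (𝓞 K) (p : ℤ) by
      push_cast; rfl, norm_int_algebraMap_eq, Int.natAbs_natCast] at this
  exact Set.mem_setOf.mpr (Nat.le_of_dvd (pow_pos hp _) h2)

lemma primesOver_card_le (p : ℕ) (hp : p.Prime) :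
    {P : Ideal (𝓞 K) | P.IsPrime ∧ P ≠ ⊥ ∧ ((p : ℕ) : 𝓞 K) ∈ P}.ncard ≤
      Module.finrank ℚ K := by
  classical
  set n := Module.finrank ℚ K
  have hfin := primesOver_finite' (K := K) p hp.pos
  set F := hfin.toFinset with hF
  have hmem : ∀ P ∈ F, P.IsPrime ∧ P ≠ ⊥ ∧ ((p : ℕ) : 𝓞 K) ∈ P := by
    intro P hP; rwa [hF, Set.Finite.mem_toFinset] at hP
  have hprod : (∏ P ∈ F, P) ∣ Ideal.span {((p : ℕ) : 𝓞 K)} := by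
    refine Finset.prod_primes_dvd _ (fun P hP => ?_) (fun P hP => ?_)
    · exact (Ideal.prime_iff_isPrime (hmem P hP).2.1).mpr (hmem P hP).1
    · rw [Ideal.dvd_iff_le, Ideal.span_le, Set.singleton_subset_iff]
      exact (hmem P hP).2.2
  have hnorm : (∏ P ∈ F, Ideal.absNorm P) ∣ p ^ n := by
    have hh := Ideal.absNorm_dvd_absNorm_of_le (Ideal.le_of_dvd hprod)
    have heq : Ideal.absNorm (∏ P ∈ F, P) = ∏ P ∈ F, Ideal.absNorm P :=
      map_prod Ideal.absNorm (fun P => P) F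
    rw [heq] at hh
    rwa [Ideal.absNorm_span_singleton, show ((p : ℕ) : 𝓞 K) = algebraMap ℤ (𝓞 K) (p : ℤ) by
      push_cast; rfl, norm_int_algebraMap_eq, Int.natAbs_natCast] at hh
  have hple : ∀ P ∈ F, p ≤ Ideal.absNorm P := by
    intro P hP
    obtain ⟨hPp, hPb, hpP⟩ := hmem P hP
    have hdvd : Ideal.absNorm P ∣ p ^ n :=
      dvd_trans (Finset.dvd_prod_of_mem _ hP) hnorm
    obtain ⟨k, hk, hkeq⟩ := (Nat.dvd_prime_pow hp).mp hdvd
    have hk0 : k ≠ 0 := by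
      rintro rfl
      simp only [pow_zero] at hkeq
      exact hPp.ne_top (Ideal.absNorm_eq_one_iff.mp hkeq)
    calc p = p ^ 1 := (pow_one p).symm
    _ ≤ p ^ k := Nat.pow_le_pow_right hp.pos (Nat.one_le_iff_ne_zero.mpr hk0)
    _ = Ideal.absNorm P := hkeq.symm
  have hcard : p ^ F.card ≤ p ^ n := by
    calc p ^ F.card = ∏ _P ∈ F, p := by rw [Finset.prod_const]
    _ ≤ ∏ P ∈ F, Ideal.absNorm P := Finset.prod_le_prod' hple
    _ ≤ p ^ n := Nat.le_of_dvd (pow_pos hp.pos _) hnorm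
  have hfc := (Nat.pow_le_pow_iff_right hp.one_lt).mp hcard
  rwa [Set.ncard_eq_toFinset_card _ hfin]

lemma Wroots_le (f : Polynomial ℤ) (hm : f.Monic) (p : ℕ) [hp : Fact p.Prime] :
    {a : ZMod p | Polynomial.aeval a f = 0}.ncard ≤ f.natDegree := by
  classical
  set fp := f.map (Int.castRingHom (ZMod p)) with hfp
  have hsub : {a : ZMod p | Polynomial.aeval a f = 0} ⊆ (fp.roots.toFinset : Set (ZMod p)) := by
    intro a ha
    simp only [Set.mem_setOf_eq] at ha
    simp only [Finset.coe_sort_coe, Multiset.mem_toFinset, Finset.mem_coe]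
    have hroot : Polynomial.eval a fp = 0 := by
      rw [hfp, Polynomial.eval_map, ← algebraMap_int_eq, ← Polynomial.aeval_def]
      exact ha
    exact Polynomial.mem_roots'.mpr ⟨(hm.map _).ne_zero, hroot⟩
  calc {a : ZMod p | Polynomial.aeval a f = 0}.ncard ≤ (fp.roots.toFinset : Set (ZMod p)).ncard :=
      Set.ncard_le_ncard hsub (Set.toFinite _)
  _ = fp.roots.toFinset.card := Set.ncard_coe_finset _
  _ ≤ Multiset.card fp.roots := fp.roots.toFinset_card_le
  _ ≤ fp.natDegree := fp.card_roots'
  _ = f.natDegree := hm.natDegree_map _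

lemma exists_small_prime (P : Ideal (𝓞 K)) (hP : P.IsPrime) (hb : P ≠ ⊥)
    (hcomp : ¬ (Ideal.absNorm P).Prime) :
    ∃ q : ℕ, q.Prime ∧ ((q : ℕ) : 𝓞 K) ∈ P ∧ q ^ 2 ≤ Ideal.absNorm P := by
  haveI : Fintype (𝓞 K ⧸ P) := @Fintype.ofFinite _ (Ideal.finiteQuotientOfFreeOfNeBot P hb)
  haveI : P.IsMaximal := Ideal.IsPrime.isMaximal hP hb
  letI : Field (𝓞 K ⧸ P) := Ideal.Quotient.field P
  obtain ⟨n, hq, hcard⟩ := FiniteField.card (𝓞 K ⧸ P) (ringChar (𝓞 K ⧸ P))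
  have hnorm : Ideal.absNorm P = ringChar (𝓞 K ⧸ P) ^ (n : ℕ) := by
    rw [Ideal.absNorm_apply, Submodule.cardQuot_apply, Nat.card_eq_fintype_card, hcard]
  refine ⟨ringChar (𝓞 K ⧸ P), hq, ?_, ?_⟩
  · have : ((ringChar (𝓞 K ⧸ P) : ℕ) : 𝓞 K ⧸ P) = 0 := by
      exact_mod_cast CharP.cast_eq_zero (𝓞 K ⧸ P) (ringChar (𝓞 K ⧸ P))
    rwa [← map_natCast (Ideal.Quotient.mk P), Ideal.Quotient.eq_zero_iff_mem] at this
  · have hne1 : (n : ℕ) ≠ 1 := by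
      intro h1
      rw [hnorm, h1, pow_one] at hcomp
      exact hcomp hq
    have hn2 : 2 ≤ (n : ℕ) := by
      have : 0 < (n : ℕ) := n.pos
      omega
    rw [hnorm]
    exact Nat.pow_le_pow_right hq.pos hn2
end S5

lemma prod_erase_eq_sq {d : ℕ} (g : Fin d → Fin d → ℝ) (hsym : ∀ i j, g i j = g j i) :
    ∏ i, ∏ j ∈ Finset.univ.erase i, g i j = (∏ i, ∏ j ∈ Finset.Ioi i, g i j) ^ 2 := by
  have herase : ∀ i : Fin d, Finset.univ.erase i = Finset.Iio i ∪ Finset.Ioi i := by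
    intro i
    ext j
    simp only [Finset.mem_erase, Finset.mem_union, Finset.mem_Iio, Finset.mem_Ioi,
      Finset.mem_univ, and_true]
    constructor
    · exact fun h => h.lt_or_gt
    · rintro (h | h)
      · exact ne_of_lt h
      · exact ne_of_gt h
  have hdisj : ∀ i : Fin d, Disjoint (Finset.Iio i) (Finset.Ioi i) := by
    intro i
    simp [Finset.disjoint_left]
    intro j hj
    omega
  have hsplit : ∏ i, ∏ j ∈ Finset.univ.erase i, g i j =
      (∏ i, ∏ j ∈ Finset.Iio i, g i j) * (∏ i, ∏ j ∈ Finset.Ioi i, g i j) := by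
    rw [← Finset.prod_mul_distrib]
    refine Finset.prod_congr rfl fun i _ => ?_
    rw [herase i, Finset.prod_union (hdisj i)]
  have hswap : (∏ i, ∏ j ∈ Finset.Iio i, g i j) = ∏ i, ∏ j ∈ Finset.Ioi i, g i j := by
    rw [Finset.prod_sigma' Finset.univ (fun i => Finset.Iio i) (fun i j => g i j),
      Finset.prod_sigma' Finset.univ (fun i => Finset.Ioi i) (fun i j => g i j)]
    refine Finset.prod_nbij' (fun p => ⟨p.2, p.1⟩) (fun p => ⟨p.2, p.1⟩) ?_ ?_ ?_ ?_ ?_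
    · rintro ⟨i, j⟩ h
      simp only [Finset.mem_sigma, Finset.mem_univ, Finset.mem_Iio, Finset.mem_Ioi,
        true_and] at h ⊢
      exact h
    · rintro ⟨i, j⟩ h
      simp only [Finset.mem_sigma, Finset.mem_univ, Finset.mem_Iio, Finset.mem_Ioi,
        true_and] at h ⊢
      exact h
    · rintro ⟨i, j⟩ _; rfl
    · rintro ⟨i, j⟩ _; rfl
    · rintro ⟨i, j⟩ _
      exact hsym i j
  rw [hsplit, hswap, sq]
section S7
variable {K : Type} [Field K] [NumberField K]

lemma pbK_dim {f : Polynomial ℤ} {θ : K} (hm : f.Monic) (hirr : Irreducible f)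
    (hroot : Polynomial.aeval θ f = 0)
    (hint : IsIntegral ℤ θ) (hadj : IntermediateField.adjoin ℚ {θ} = ⊤) :
    (pbK θ hint hadj).dim = f.natDegree := by
  have h1 : (pbK θ hint hadj).dim = (minpoly ℚ θ).natDegree := rfl
  rw [h1, minpoly_rat_eq hm hirr hroot, (hm.natDegree_map _)]

lemma finrank_eq_natDegree {f : Polynomial ℤ} {θ : K} (hm : f.Monic) (hirr : Irreducible f)
    (hroot : Polynomial.aeval θ f = 0)
    (hint : IsIntegral ℤ θ) (hadj : IntermediateField.adjoin ℚ {θ} = ⊤) :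
    Module.finrank ℚ K = f.natDegree := by
  rw [(pbK θ hint hadj).finrank, pbK_dim hm hirr hroot hint hadj]

lemma natAbs_discr_eq {f : Polynomial ℤ} (d : ℕ) (hd : f.natDegree = d)
    (hm : f.Monic) (hirr : Irreducible f)
    (θs : Fin d → ℂ)
    (hfact : f.map (Int.castRingHom ℂ) = ∏ i, (X - C (θs i)))
    (θ : K) (hroot : Polynomial.aeval θ f = 0) (hint : IsIntegral ℤ θ)
    (hadj : IntermediateField.adjoin ℚ {θ} = ⊤)
    (z : ℤ) (hz : algebraMap ℤ ℚ z = Algebra.discr ℚ (pbK θ hint hadj).basis) :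
    (z.natAbs : ℝ) = ‖∏ i, ∏ j ∈ Finset.univ.erase i, (θs i - θs j)‖ := by
  classical
  set pb := pbK θ hint hadj with hpb
  have hdim : pb.dim = d := by rw [hpb, pbK_dim hm hirr hroot hint hadj, hd]
  subst hdim
  have hgen : pb.gen = θ := pbK_gen θ hint hadj
  -- each embedding sends θ to some θs i
  have hσroot : ∀ σ : K →ₐ[ℚ] ℂ, ∃ i, θs i = σ θ := by
    intro σ
    have h0 : Polynomial.aeval (σ θ) f = 0 := by
      have := Polynomial.aeval_algHom_apply (σ.restrictScalars ℤ) θ f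
      rw [hroot, map_zero] at this
      exact this
    have h1 : (∏ i, (σ θ - θs i)) = 0 := by
      have h2 : Polynomial.aeval (σ θ) f =
          Polynomial.eval (σ θ) (f.map (Int.castRingHom ℂ)) := by
        rw [Polynomial.eval_map, ← algebraMap_int_eq, ← Polynomial.aeval_def]
      rw [h2, hfact, Polynomial.eval_prod] at h0
      simpa using h0
    obtain ⟨i, _, hi⟩ := Finset.prod_eq_zero_iff.mp h1
    exact ⟨i, by linear_combination -hi⟩
  have hcard : Fintype.card (K →ₐ[ℚ] ℂ) = pb.dim := by
    rw [AlgHom.card, pb.finrank]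
  set m : (K →ₐ[ℚ] ℂ) → Fin pb.dim := fun σ => (hσroot σ).choose with hm'
  have hmθ : ∀ σ : K →ₐ[ℚ] ℂ, θs (m σ) = σ θ := fun σ => (hσroot σ).choose_spec
  have hminj : Function.Injective m := by
    intro σ τ h
    refine pb.algHom_ext ?_
    rw [hgen, ← hmθ σ, ← hmθ τ, h]
  have hmbij : Function.Bijective m := by
    rw [Fintype.bijective_iff_injective_and_card]
    exact ⟨hminj, by rw [hcard, Fintype.card_fin]⟩
  set e : Fin pb.dim ≃ (K →ₐ[ℚ] ℂ) := (Equiv.ofBijective m hmbij).symm with he'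
  have he : ∀ j, (e j) θ = θs j := by
    intro j
    have h2 := hmθ (e j)
    rw [show m (e j) = j from (Equiv.ofBijective m hmbij).apply_symm_apply j] at h2
    exact h2.symm
  have hdiscr := Algebra.discr_powerBasis_eq_prod ℚ ℂ pb e
  have habs := congrArg (‖·‖) hdiscr
  -- LHS
  have hlhs : ‖algebraMap ℚ ℂ (Algebra.discr ℚ pb.basis)‖ = (z.natAbs : ℝ) := by
    rw [← hz]
    have hcomp : algebraMap ℚ ℂ (algebraMap ℤ ℚ z) =
        ((algebraMap ℚ ℂ).comp (algebraMap ℤ ℚ)) z := rfl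
    rw [hcomp, Subsingleton.elim ((algebraMap ℚ ℂ).comp (algebraMap ℤ ℚ)) (Int.castRingHom ℂ)]
    show ‖((z : ℂ))‖ = _
    rw [Complex.norm_intCast, Nat.cast_natAbs, Int.cast_abs]
  -- RHS
  have hrhs : ‖∏ i, ∏ j ∈ Finset.Ioi i, (e j pb.gen - e i pb.gen) ^ 2‖ =
      ∏ i, ∏ j ∈ Finset.Ioi i, (‖θs j - θs i‖) ^ 2 := by
    rw [norm_prod]
    refine Finset.prod_congr rfl fun i _ => ?_
    rw [norm_prod]
    refine Finset.prod_congr rfl fun j _ => ?_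
    rw [norm_pow, hgen, he, he]
  rw [hlhs, hrhs] at habs
  have hR : ‖∏ i, ∏ j ∈ Finset.univ.erase i, (θs i - θs j)‖ =
      ∏ i, ∏ j ∈ Finset.univ.erase i, ‖θs i - θs j‖ := by
    rw [norm_prod]
    exact Finset.prod_congr rfl fun i _ => norm_prod _ _
  rw [habs, hR, prod_erase_eq_sq (fun i j => ‖θs i - θs j‖)
    (fun i j => norm_sub_rev _ _)]
  rw [sq, ← Finset.prod_mul_distrib]
  refine Finset.prod_congr rfl fun i _ => ?_
  rw [← Finset.prod_mul_distrib]
  refine Finset.prod_congr rfl fun j _ => ?_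
  rw [norm_sub_rev (θs j) (θs i), sq]

end S7

section S8
variable {K : Type} [Field K] [NumberField K]
open Finset

lemma good_prime_count (f : Polynomial ℤ) (hm : f.Monic) (hirr : Irreducible f)
    (θ : K) (hroot : Polynomial.aeval θ f = 0) (hint : IsIntegral ℤ θ)
    (hadj : IntermediateField.adjoin ℚ {θ} = ⊤) (θ' : 𝓞 K)
    (hθ' : algebraMap (𝓞 K) K θ' = θ)
    (z : ℤ) (hz : algebraMap ℤ ℚ z = Algebra.discr ℚ (pbK θ hint hadj).basis)
    (p : ℕ) (hp : p.Prime) (hpz : ¬ ((p : ℤ) ∣ z)) :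
    {P : Ideal (𝓞 K) | P.IsPrime ∧ P ≠ ⊥ ∧ Ideal.absNorm P = p}.ncard = Wroots f p := by
  haveI : Fact p.Prime := ⟨hp⟩
  have h1 := card_primes_norm_eq K p
  have hsup := conductor_sup_eq_top θ' (z_mem_conductor_comap θ hint hadj θ' hθ' z hz) hp hpz
  have h2 := card_homs_eq_card_roots K f θ' (minpoly_int_eq hm hirr hroot θ' hθ') p hsup
  rw [Wroots, ← Nat.card_coe_set_eq, ← Nat.card_coe_set_eq]
  exact h1.trans h2

lemma piK_eq (x : ℝ) (hx0 : 0 ≤ x) :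
    piK K x = (∑ q ∈ (Finset.range (⌊x⌋₊ + 1)).filter Nat.Prime,
        {P : Ideal (𝓞 K) | P.IsPrime ∧ P ≠ ⊥ ∧ Ideal.absNorm P = q}.ncard)
      + {P : Ideal (𝓞 K) | P.IsPrime ∧ P ≠ ⊥ ∧ (Ideal.absNorm P : ℝ) ≤ x ∧
          ¬ (Ideal.absNorm P).Prime}.ncard := by
  classical
  set s := (Finset.range (⌊x⌋₊ + 1)).filter Nat.Prime with hs
  set T : Set (Ideal (𝓞 K)) :=
    {P | P.IsPrime ∧ P ≠ ⊥ ∧ (Ideal.absNorm P : ℝ) ≤ x} with hT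
  set T1 : Set (Ideal (𝓞 K)) :=
    {P | P.IsPrime ∧ P ≠ ⊥ ∧ (Ideal.absNorm P : ℝ) ≤ x ∧ (Ideal.absNorm P).Prime} with hT1
  set T2 : Set (Ideal (𝓞 K)) :=
    {P | P.IsPrime ∧ P ≠ ⊥ ∧ (Ideal.absNorm P : ℝ) ≤ x ∧ ¬ (Ideal.absNorm P).Prime} with hT2
  set E : ℕ → Set (Ideal (𝓞 K)) :=
    fun q => {P | P.IsPrime ∧ P ≠ ⊥ ∧ Ideal.absNorm P = q} with hE
  have hTfin : T.Finite := by
    apply (Ideal.finite_setOf_absNorm_le (S := 𝓞 K) ⌊x⌋₊).subset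
    rintro P ⟨_, _, hPx⟩
    exact Set.mem_setOf.mpr (Nat.le_floor hPx)
  have hT1fin : T1.Finite := hTfin.subset (fun P hP => ⟨hP.1, hP.2.1, hP.2.2.1⟩)
  have hT2fin : T2.Finite := hTfin.subset (fun P hP => ⟨hP.1, hP.2.1, hP.2.2.1⟩)
  have hEfin : ∀ q : ℕ, (E q).Finite := by
    intro q
    apply (Ideal.finite_setOf_absNorm_eq (S := 𝓞 K) q).subset
    rintro P ⟨_, _, h⟩
    exact h
  have hunion : T = T1 ∪ T2 := by
    ext P
    simp only [hT, hT1, hT2, Set.mem_setOf_eq, Set.mem_union]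
    tauto
  have hdisj : Disjoint T1 T2 := by
    rw [Set.disjoint_left]
    rintro P ⟨_, _, _, hprime⟩ ⟨_, _, _, hnotprime⟩
    exact hnotprime hprime
  have hcardT : T.ncard = T1.ncard + T2.ncard := by
    rw [hunion]
    exact Set.ncard_union_eq hdisj hT1fin hT2fin
  have hT1card : T1.ncard = ∑ q ∈ s, (E q).ncard := by
    have hbiUnion : hT1fin.toFinset = s.biUnion (fun q => (hEfin q).toFinset) := by
      ext P
      simp only [Set.Finite.mem_toFinset, Finset.mem_biUnion, hT1, hE, Set.mem_setOf_eq, hs,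
        Finset.mem_filter, Finset.mem_range]
      constructor
      · rintro ⟨hP, hPb, hPx, hPp⟩
        exact ⟨Ideal.absNorm P, ⟨Nat.lt_succ_of_le (Nat.le_floor hPx), hPp⟩, hP, hPb, rfl⟩
      · rintro ⟨q, ⟨hqlt, hqp⟩, hP, hPb, rfl⟩
        refine ⟨hP, hPb, ?_, hqp⟩
        calc ((Ideal.absNorm P : ℝ)) ≤ (⌊x⌋₊ : ℝ) := by
              exact_mod_cast Nat.lt_succ_iff.mp hqlt
        _ ≤ x := Nat.floor_le hx0
    have hpair : ∀ q₁ ∈ s, ∀ q₂ ∈ s, q₁ ≠ q₂ →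
        Disjoint ((hEfin q₁).toFinset) ((hEfin q₂).toFinset) := by
      intro q₁ _ q₂ _ hne
      rw [Finset.disjoint_left]
      intro P hP1 hP2
      rw [Set.Finite.mem_toFinset] at hP1 hP2
      exact hne (hP1.2.2.symm.trans hP2.2.2)
    rw [Set.ncard_eq_toFinset_card _ hT1fin, hbiUnion, Finset.card_biUnion hpair]
    exact Finset.sum_congr rfl fun q _ => (Set.ncard_eq_toFinset_card _ (hEfin q)).symm
  show T.ncard = _
  rw [hcardT, hT1card]

lemma T2_le (x : ℝ) (hx0 : 0 ≤ x) :
    {P : Ideal (𝓞 K) | P.IsPrime ∧ P ≠ ⊥ ∧ (Ideal.absNorm P : ℝ) ≤ x ∧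
        ¬ (Ideal.absNorm P).Prime}.ncard ≤
      Module.finrank ℚ K *
        ((Finset.range (⌊Real.sqrt x⌋₊ + 1)).filter Nat.Prime).card := by
  classical
  set s' := (Finset.range (⌊Real.sqrt x⌋₊ + 1)).filter Nat.Prime with hs'
  set T2 : Set (Ideal (𝓞 K)) :=
    {P | P.IsPrime ∧ P ≠ ⊥ ∧ (Ideal.absNorm P : ℝ) ≤ x ∧ ¬ (Ideal.absNorm P).Prime} with hT2
  have hT2fin : T2.Finite := by
    apply (Ideal.finite_setOf_absNorm_le (S := 𝓞 K) ⌊x⌋₊).subset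
    rintro P ⟨_, _, hPx, _⟩
    exact Set.mem_setOf.mpr (Nat.le_floor hPx)
  set F : ℕ → Finset (Ideal (𝓞 K)) := fun q =>
    if h : 0 < q then (primesOver_finite' (K := K) q h).toFinset else ∅ with hF
  have hsub : hT2fin.toFinset ⊆ s'.biUnion F := by
    intro P hP
    rw [Set.Finite.mem_toFinset] at hP
    obtain ⟨hPp, hPb, hPx, hPnp⟩ := hP
    obtain ⟨q, hq, hqP, hq2⟩ := exists_small_prime P hPp hPb hPnp
    rw [Finset.mem_biUnion]
    refine ⟨q, ?_, ?_⟩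
    · rw [hs', Finset.mem_filter, Finset.mem_range]
      refine ⟨Nat.lt_succ_of_le (Nat.le_floor ?_), hq⟩
      have h1 : ((q : ℝ)) ^ 2 ≤ x := by
        calc ((q : ℝ)) ^ 2 = ((q ^ 2 : ℕ) : ℝ) := by push_cast; ring
        _ ≤ (Ideal.absNorm P : ℝ) := by exact_mod_cast hq2
        _ ≤ x := hPx
      have := Real.sqrt_le_sqrt h1
      rwa [Real.sqrt_sq (by positivity)] at this
    · rw [hF]
      simp only [hq.pos, dif_pos]
      rw [Set.Finite.mem_toFinset]
      exact ⟨hPp, hPb, hqP⟩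
  calc T2.ncard = hT2fin.toFinset.card := Set.ncard_eq_toFinset_card _ hT2fin
  _ ≤ (s'.biUnion F).card := Finset.card_le_card hsub
  _ ≤ ∑ q ∈ s', (F q).card := Finset.card_biUnion_le
  _ ≤ ∑ _q ∈ s', Module.finrank ℚ K := by
      refine Finset.sum_le_sum fun q hq => ?_
      rw [hs', Finset.mem_filter] at hq
      rw [hF]
      simp only [hq.2.pos, dif_pos]
      rw [← Set.ncard_eq_toFinset_card _ (primesOver_finite' (K := K) q hq.2.pos)]
      exact primesOver_card_le q hq.2
  _ = Module.finrank ℚ K * s'.card := by rw [Finset.sum_const, smul_eq_mul, mul_comm]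

end S8

end Aux

noncomputable section

/-- For `f ∈ ℤ[x]` monic irreducible of degree `d ≥ 2` with discriminant of absolute
value `D_f ≥ 1` (expressed via the complex roots `θs` of `f`), and `K = ℚ(θ)` for a root
`θ` of `f`, one has `|π_K(x) − ∑_{p ≤ x} W(p)| ≤ c·d·(√x + log(3 D_f))` for all `x ≥ 2`,
with `c > 0` an absolute constant. -/
theorem piK_close_to_sum_Wroots :
    ∃ c : ℝ, 0 < c ∧
      ∀ (f : Polynomial ℤ) (d : ℕ), f.Monic → Irreducible f → f.natDegree = d → 2 ≤ d →
        ∀ θs : Fin d → ℂ,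
          f.map (Int.castRingHom ℂ) = ∏ i, (Polynomial.X - Polynomial.C (θs i)) →
          ∀ Df : ℝ,
            Df = ‖∏ i, ∏ j ∈ Finset.univ.erase i, (θs i - θs j)‖ →
            1 ≤ Df →
            ∀ (K : Type) [Field K] [NumberField K] (θ : K),
              Polynomial.aeval θ f = 0 →
              IntermediateField.adjoin ℚ {θ} = ⊤ →
              ∀ x : ℝ, 2 ≤ x →
                |(piK K x : ℝ) -
                    ∑ p ∈ (Finset.range (⌊x⌋₊ + 1)).filter Nat.Prime, (Wroots f p : ℝ)| ≤
                  c * d * (Real.sqrt x + Real.log (3 * Df)) := by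
  classical
  refine ⟨2, by norm_num, ?_⟩
  intro f d hm hirr hdeg hd2 θs hfact Df hDf hDf1 K _ _ θ hroot hadj x hx
  subst hdeg
  have hx0 : (0 : ℝ) ≤ x := by linarith
  have hint : IsIntegral ℤ θ := ⟨f, hm, by rw [← Polynomial.aeval_def]; exact hroot⟩
  set θ' : NumberField.RingOfIntegers K := ⟨θ, hint⟩ with hθ'def
  have hθ' : algebraMap (NumberField.RingOfIntegers K) K θ' = θ := rfl
  obtain ⟨z, hz⟩ := discr_int θ hint hadj
  have hDfz : (z.natAbs : ℝ) = Df :=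
    (natAbs_discr_eq f.natDegree rfl hm hirr θs hfact θ hroot hint hadj z hz).trans hDf.symm
  have hzpos : 1 ≤ z.natAbs := by
    have h1 : (1 : ℝ) ≤ (z.natAbs : ℝ) := by rw [hDfz]; exact hDf1
    exact_mod_cast h1
  have hfr : Module.finrank ℚ K = f.natDegree := finrank_eq_natDegree hm hirr hroot hint hadj
  have hD2 : (2 : ℝ) ≤ (f.natDegree : ℝ) := by exact_mod_cast hd2
  have hD0 : (0 : ℝ) ≤ (f.natDegree : ℝ) := by linarith
  -- the partition of piK
  have hpiK0 := piK_eq (K := K) x hx0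
  have hpiK : (piK K x : ℝ) =
      (∑ q ∈ (Finset.range (⌊x⌋₊ + 1)).filter Nat.Prime,
        (({P : Ideal (NumberField.RingOfIntegers K) |
            P.IsPrime ∧ P ≠ ⊥ ∧ Ideal.absNorm P = q}.ncard : ℝ))) +
      (({P : Ideal (NumberField.RingOfIntegers K) | P.IsPrime ∧ P ≠ ⊥ ∧
          (Ideal.absNorm P : ℝ) ≤ x ∧ ¬ (Ideal.absNorm P).Prime}.ncard : ℝ)) := by
    rw [hpiK0]
    push_cast
    ring
  -- per-prime bound
  have hkey : ∀ q ∈ (Finset.range (⌊x⌋₊ + 1)).filter Nat.Prime,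
      |(({P : Ideal (NumberField.RingOfIntegers K) |
          P.IsPrime ∧ P ≠ ⊥ ∧ Ideal.absNorm P = q}.ncard : ℝ)) - (Wroots f q : ℝ)| ≤
        (if q ∣ z.natAbs then (f.natDegree : ℝ) else 0) := by
    intro q hq
    rw [Finset.mem_filter] at hq
    have hqp : q.Prime := hq.2
    haveI : Fact q.Prime := ⟨hqp⟩
    by_cases hdvd : q ∣ z.natAbs
    · rw [if_pos hdvd]
      have h1 : {P : Ideal (NumberField.RingOfIntegers K) |
          P.IsPrime ∧ P ≠ ⊥ ∧ Ideal.absNorm P = q}.ncard ≤ f.natDegree := by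
        have hsubset : {P : Ideal (NumberField.RingOfIntegers K) |
            P.IsPrime ∧ P ≠ ⊥ ∧ Ideal.absNorm P = q} ⊆
            {P : Ideal (NumberField.RingOfIntegers K) |
              P.IsPrime ∧ P ≠ ⊥ ∧ ((q : ℕ) : NumberField.RingOfIntegers K) ∈ P} := by
          rintro P ⟨hP, hPb, hPn⟩
          refine ⟨hP, hPb, ?_⟩
          rw [← hPn]
          exact Ideal.absNorm_mem P
        calc {P : Ideal (NumberField.RingOfIntegers K) |
            P.IsPrime ∧ P ≠ ⊥ ∧ Ideal.absNorm P = q}.ncard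
            ≤ {P : Ideal (NumberField.RingOfIntegers K) |
              P.IsPrime ∧ P ≠ ⊥ ∧ ((q : ℕ) : NumberField.RingOfIntegers K) ∈ P}.ncard :=
            Set.ncard_le_ncard hsubset (primesOver_finite' q hqp.pos)
        _ ≤ Module.finrank ℚ K := primesOver_card_le q hqp
        _ = f.natDegree := hfr
      have h2 : Wroots f q ≤ f.natDegree := Wroots_le f hm q
      rw [abs_sub_le_iff]
      constructor
      · have ha : (({P : Ideal (NumberField.RingOfIntegers K) |
            P.IsPrime ∧ P ≠ ⊥ ∧ Ideal.absNorm P = q}.ncard : ℝ)) ≤ (f.natDegree : ℝ) := by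
          exact_mod_cast h1
        have hb : (0 : ℝ) ≤ (Wroots f q : ℝ) := Nat.cast_nonneg _
        linarith
      · have ha : ((Wroots f q : ℝ)) ≤ (f.natDegree : ℝ) := by exact_mod_cast h2
        have hb : (0 : ℝ) ≤ (({P : Ideal (NumberField.RingOfIntegers K) |
            P.IsPrime ∧ P ≠ ⊥ ∧ Ideal.absNorm P = q}.ncard : ℝ)) := Nat.cast_nonneg _
        linarith
    · rw [if_neg hdvd]
      have hnd : ¬ ((q : ℤ) ∣ z) := by
        intro hdz
        apply hdvd
        rw [← Int.natAbs_natCast q]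
        exact Int.natAbs_dvd_natAbs.mpr hdz
      rw [good_prime_count f hm hirr θ hroot hint hadj θ' hθ' z hz q hqp hnd]
      simp
  -- sum bound
  have hsum1 : |(∑ q ∈ (Finset.range (⌊x⌋₊ + 1)).filter Nat.Prime,
      (({P : Ideal (NumberField.RingOfIntegers K) |
          P.IsPrime ∧ P ≠ ⊥ ∧ Ideal.absNorm P = q}.ncard : ℝ))) -
      (∑ q ∈ (Finset.range (⌊x⌋₊ + 1)).filter Nat.Prime, (Wroots f q : ℝ))| ≤
      (f.natDegree : ℝ) * (z.natAbs.primeFactors.card : ℝ) := by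
    rw [← Finset.sum_sub_distrib]
    calc |∑ q ∈ (Finset.range (⌊x⌋₊ + 1)).filter Nat.Prime,
        ((({P : Ideal (NumberField.RingOfIntegers K) |
            P.IsPrime ∧ P ≠ ⊥ ∧ Ideal.absNorm P = q}.ncard : ℝ)) - (Wroots f q : ℝ))|
        ≤ ∑ q ∈ (Finset.range (⌊x⌋₊ + 1)).filter Nat.Prime,
          |(({P : Ideal (NumberField.RingOfIntegers K) |
            P.IsPrime ∧ P ≠ ⊥ ∧ Ideal.absNorm P = q}.ncard : ℝ)) - (Wroots f q : ℝ)| :=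
        Finset.abs_sum_le_sum_abs _ _
    _ ≤ ∑ q ∈ (Finset.range (⌊x⌋₊ + 1)).filter Nat.Prime,
          (if q ∣ z.natAbs then (f.natDegree : ℝ) else 0) := Finset.sum_le_sum hkey
    _ = ∑ q ∈ ((Finset.range (⌊x⌋₊ + 1)).filter Nat.Prime).filter (· ∣ z.natAbs),
          (f.natDegree : ℝ) := (Finset.sum_filter _ _).symm
    _ = (((Finset.range (⌊x⌋₊ + 1)).filter Nat.Prime).filter (· ∣ z.natAbs)).card *
          (f.natDegree : ℝ) := by rw [Finset.sum_const, nsmul_eq_mul]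
    _ ≤ (z.natAbs.primeFactors.card : ℝ) * (f.natDegree : ℝ) := by
        have hsubset : ((Finset.range (⌊x⌋₊ + 1)).filter Nat.Prime).filter (· ∣ z.natAbs) ⊆
            z.natAbs.primeFactors := by
          intro q hq'
          rw [Finset.mem_filter] at hq'
          obtain ⟨hqs, hqd⟩ := hq'
          rw [Finset.mem_filter] at hqs
          exact Nat.mem_primeFactors.mpr ⟨hqs.2, hqd, by omega⟩
        have hcc := Finset.card_le_card hsubset
        exact mul_le_mul_of_nonneg_right (by exact_mod_cast hcc) hD0
    _ = (f.natDegree : ℝ) * (z.natAbs.primeFactors.card : ℝ) := mul_comm _ _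
  -- omega bound
  have homega : (z.natAbs.primeFactors.card : ℝ) ≤ 2 * Real.log (3 * Df) := by
    set ω := z.natAbs.primeFactors.card with hω
    have hpow : 2 ^ ω ≤ z.natAbs := by
      calc 2 ^ ω = ∏ _p ∈ z.natAbs.primeFactors, 2 := by rw [Finset.prod_const]
      _ ≤ ∏ p ∈ z.natAbs.primeFactors, p :=
          Finset.prod_le_prod' (fun p hp => (Nat.prime_of_mem_primeFactors hp).two_le)
      _ ≤ z.natAbs := Nat.le_of_dvd (by omega) (Nat.prod_primeFactors_dvd _)
    have hpowR : (2 : ℝ) ^ ω ≤ 3 * Df := by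
      have h1 : ((2 ^ ω : ℕ) : ℝ) ≤ (z.natAbs : ℝ) := by exact_mod_cast hpow
      rw [hDfz] at h1
      push_cast at h1
      linarith
    have hlog : (ω : ℝ) * Real.log 2 ≤ Real.log (3 * Df) := by
      have h2 : Real.log ((2 : ℝ) ^ ω) ≤ Real.log (3 * Df) :=
        Real.log_le_log (by positivity) hpowR
      rwa [Real.log_pow] at h2
    have hl2 : (0.6931471803 : ℝ) < Real.log 2 := Real.log_two_gt_d9
    have hω0 : (0 : ℝ) ≤ (ω : ℝ) := Nat.cast_nonneg _
    nlinarith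
  -- t2 bound
  have hs'card : ((((Finset.range (⌊Real.sqrt x⌋₊ + 1)).filter Nat.Prime)).card : ℝ) ≤
      Real.sqrt x := by
    have hsubset : (Finset.range (⌊Real.sqrt x⌋₊ + 1)).filter Nat.Prime ⊆
        (Finset.range (⌊Real.sqrt x⌋₊ + 1)).erase 0 := by
      intro q hq
      rw [Finset.mem_filter] at hq
      rw [Finset.mem_erase]
      exact ⟨hq.2.ne_zero, hq.1⟩
    have h1 := Finset.card_le_card hsubset
    rw [Finset.card_erase_of_mem (Finset.mem_range.mpr (Nat.succ_pos _)),
      Finset.card_range] at h1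
    calc ((((Finset.range (⌊Real.sqrt x⌋₊ + 1)).filter Nat.Prime)).card : ℝ)
        ≤ ((⌊Real.sqrt x⌋₊ + 1 - 1 : ℕ) : ℝ) := by exact_mod_cast h1
    _ = ((⌊Real.sqrt x⌋₊ : ℕ) : ℝ) := by norm_num
    _ ≤ Real.sqrt x := Nat.floor_le (Real.sqrt_nonneg x)
  have ht2le : (({P : Ideal (NumberField.RingOfIntegers K) | P.IsPrime ∧ P ≠ ⊥ ∧
      (Ideal.absNorm P : ℝ) ≤ x ∧ ¬ (Ideal.absNorm P).Prime}.ncard : ℝ)) ≤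
      (f.natDegree : ℝ) * Real.sqrt x := by
    have h1 := T2_le (K := K) x hx0
    rw [hfr] at h1
    calc (({P : Ideal (NumberField.RingOfIntegers K) | P.IsPrime ∧ P ≠ ⊥ ∧
        (Ideal.absNorm P : ℝ) ≤ x ∧ ¬ (Ideal.absNorm P).Prime}.ncard : ℝ))
        ≤ ((f.natDegree * ((Finset.range (⌊Real.sqrt x⌋₊ + 1)).filter Nat.Prime).card : ℕ) : ℝ) :=
          by exact_mod_cast h1
    _ = (f.natDegree : ℝ) *
          (((Finset.range (⌊Real.sqrt x⌋₊ + 1)).filter Nat.Prime).card : ℝ) := by push_cast; ring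
    _ ≤ (f.natDegree : ℝ) * Real.sqrt x := mul_le_mul_of_nonneg_left hs'card hD0
  -- final assembly
  have hL0 : (0 : ℝ) ≤ Real.log (3 * Df) := Real.log_nonneg (by linarith)
  have hsqrt0 : (0 : ℝ) ≤ Real.sqrt x := Real.sqrt_nonneg x
  have ht20 : (0 : ℝ) ≤ (({P : Ideal (NumberField.RingOfIntegers K) | P.IsPrime ∧ P ≠ ⊥ ∧
      (Ideal.absNorm P : ℝ) ≤ x ∧ ¬ (Ideal.absNorm P).Prime}.ncard : ℝ)) := Nat.cast_nonneg _
  rw [hpiK]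
  have htri : ∀ a b t : ℝ, 0 ≤ t → |a - b| ≤ (f.natDegree : ℝ) * (z.natAbs.primeFactors.card : ℝ)
      → |a + t - b| ≤ (f.natDegree : ℝ) * (z.natAbs.primeFactors.card : ℝ) + t := by
    intro a b t ht hab
    have := abs_add_le (a - b) t
    have h2 : |t| = t := abs_of_nonneg ht
    have h3 : a + t - b = (a - b) + t := by ring
    rw [h3]
    calc |(a - b) + t| ≤ |a - b| + |t| := abs_add_le _ _
    _ ≤ (f.natDegree : ℝ) * (z.natAbs.primeFactors.card : ℝ) + t := by rw [h2]; linarith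
  have hfinal := htri _ _ _ ht20 hsum1
  calc |(∑ q ∈ (Finset.range (⌊x⌋₊ + 1)).filter Nat.Prime,
        (({P : Ideal (NumberField.RingOfIntegers K) |
            P.IsPrime ∧ P ≠ ⊥ ∧ Ideal.absNorm P = q}.ncard : ℝ))) +
      (({P : Ideal (NumberField.RingOfIntegers K) | P.IsPrime ∧ P ≠ ⊥ ∧
          (Ideal.absNorm P : ℝ) ≤ x ∧ ¬ (Ideal.absNorm P).Prime}.ncard : ℝ)) -
      ∑ p ∈ (Finset.range (⌊x⌋₊ + 1)).filter Nat.Prime, (Wroots f p : ℝ)|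
      ≤ (f.natDegree : ℝ) * (z.natAbs.primeFactors.card : ℝ) +
        (({P : Ideal (NumberField.RingOfIntegers K) | P.IsPrime ∧ P ≠ ⊥ ∧
          (Ideal.absNorm P : ℝ) ≤ x ∧ ¬ (Ideal.absNorm P).Prime}.ncard : ℝ)) := hfinal
  _ ≤ (f.natDegree : ℝ) * (2 * Real.log (3 * Df)) + (f.natDegree : ℝ) * Real.sqrt x := by
      have := mul_le_mul_of_nonneg_left homega hD0
      linarith
  _ ≤ 2 * (f.natDegree : ℝ) * (Real.sqrt x + Real.log (3 * Df)) := by nlinarith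

end
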